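/- arXiv:1707.00083 — 2 statements merged into one kernel-verified Lean document; each statement's English description precedes it below -/
import Mathlib

section
/- For any positive integer k and any real λ, if X is an Erlang(k,1) random variable (sum of k independent exponential(1) random variables), then P(X ≥ λk) ≤ exp(1 - λ). -/
open MeasureTheory ProbabilityTheory Real Finset


noncomputable def Ftail (m : ℕ) (x : ℝ) : ℝ :=
  if 0 ≤ x then Real.exp (-x) * ∑ j ∈ Finset.range m, x ^ j / (Nat.factorial j : ℝ) else 1

lemma Ftail_nonneg (m : ℕ) (x : ℝ) : 0 ≤ Ftail m x := by
  unfold Ftail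
  split
  case isTrue h =>
    exact mul_nonneg (Real.exp_nonneg _) (Finset.sum_nonneg fun j _ =>
      div_nonneg (pow_nonneg h j) (Nat.cast_nonneg _))
  case isFalse _ => exact zero_le_one

lemma Ftail_le_one (m : ℕ) (x : ℝ) : Ftail m x ≤ 1 := by
  unfold Ftail
  split
  case isTrue h =>
    calc Real.exp (-x) * ∑ j ∈ Finset.range m, x ^ j / (Nat.factorial j : ℝ)
        ≤ Real.exp (-x) * Real.exp x :=
          mul_le_mul_of_nonneg_left (Real.sum_le_exp_of_nonneg h m) (Real.exp_nonneg _)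
      _ = 1 := by rw [← Real.exp_add]; simp
  case isFalse _ => exact le_refl 1

lemma Ftail_sum_zero (m : ℕ) (hm : 1 ≤ m) :
    ∑ j ∈ Finset.range m, (0:ℝ) ^ j / (Nat.factorial j : ℝ) = 1 := by
  rw [Finset.sum_eq_single_of_mem 0 (Finset.mem_range.mpr hm)]
  · norm_num
  · intro j _ hj; simp [zero_pow hj]

lemma Ftail_of_nonpos {m : ℕ} (hm : 1 ≤ m) {t : ℝ} (ht : t ≤ 0) : Ftail m t = 1 := by
  unfold Ftail
  split
  case isTrue h =>
    have : t = 0 := le_antisymm ht h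
    subst this
    rw [Ftail_sum_zero m hm]; simp
  case isFalse _ => rfl

lemma Ftail_continuous {m : ℕ} (hm : 1 ≤ m) : Continuous (Ftail m) := by
  unfold Ftail
  apply Continuous.if_le
  · exact (Real.continuous_exp.comp continuous_neg).mul
      (continuous_finset_sum _ fun j _ => (continuous_pow j).div_const _)
  · exact continuous_const
  · exact continuous_const
  · exact continuous_id
  · intro x hx
    have : x = 0 := hx.symm
    subst this
    rw [Ftail_sum_zero m hm]; simp

lemma intervalIntegrable_of_bounded {f : ℝ → ℝ} (hf : Measurable f) {M : ℝ}
    (hM : ∀ u, |f u| ≤ M) (a b : ℝ) : IntervalIntegrable f MeasureTheory.volume a b := by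
  constructor <;>
    exact Measure.integrableOn_of_bounded measure_Ioc_lt_top.ne hf.aestronglyMeasurable
      (Filter.Eventually.of_forall fun u => by simpa using hM u)

lemma Ftail_comp_log_measurable {m : ℕ} (hm : 1 ≤ m) (x : ℝ) :
    Measurable (fun u : ℝ => Ftail m (x + Real.log u)) :=
  (Ftail_continuous hm).measurable.comp (measurable_const.add Real.measurable_log)

lemma Ftail_comp_log_bound {m : ℕ} (x u : ℝ) : |Ftail m (x + Real.log u)| ≤ 1 :=
  abs_le.mpr ⟨by linarith [Ftail_nonneg m (x + Real.log u)], Ftail_le_one m _⟩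

lemma Ftail_integral {m : ℕ} (hm : 1 ≤ m) {x : ℝ} (hx : 0 ≤ x) :
    ∫ u in (0:ℝ)..1, Ftail m (x + Real.log u) = Ftail (m + 1) x := by
  set u₀ : ℝ := Real.exp (-x) with hu₀def
  have hu₀pos : 0 < u₀ := Real.exp_pos _
  have hint1 : IntervalIntegrable (fun u => Ftail m (x + Real.log u))
      MeasureTheory.volume 0 u₀ :=
    intervalIntegrable_of_bounded (Ftail_comp_log_measurable hm x) (Ftail_comp_log_bound x) _ _
  have hint2 : IntervalIntegrable (fun u => Ftail m (x + Real.log u))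
      MeasureTheory.volume u₀ 1 :=
    intervalIntegrable_of_bounded (Ftail_comp_log_measurable hm x) (Ftail_comp_log_bound x) _ _
  have hsplit := intervalIntegral.integral_add_adjacent_intervals hint1 hint2
  -- first piece
  have hI1 : ∫ u in (0:ℝ)..u₀, Ftail m (x + Real.log u) = u₀ := by
    have hcong : ∀ᵐ u ∂(MeasureTheory.volume), u ∈ Set.uIoc (0:ℝ) u₀ →
        Ftail m (x + Real.log u) = (1:ℝ) := by
      refine Filter.Eventually.of_forall fun u hu => ?_
      rw [Set.uIoc_of_le hu₀pos.le] at hu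
      have hu1 : 0 < u := hu.1
      have hu2 : Real.log u ≤ -x := (Real.log_le_iff_le_exp hu1).mpr hu.2
      exact Ftail_of_nonpos hm (by linarith)
    rw [intervalIntegral.integral_congr_ae hcong]
    simp
  -- second piece, substitution u = exp (z - x)
  have hI2 : ∫ u in u₀..1, Ftail m (x + Real.log u)
      = Real.exp (-x) * ∑ j ∈ Finset.range m, x ^ (j+1) / (Nat.factorial (j+1) : ℝ) := by
    have hderiv : ∀ z ∈ Set.uIcc (0:ℝ) x,
        HasDerivAt (fun z => Real.exp (z - x)) (Real.exp (z - x)) z := by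
      intro z _
      simpa [Function.comp_def] using (Real.hasDerivAt_exp (z - x)).comp z ((hasDerivAt_id z).sub_const x)
    have hcont' : ContinuousOn (fun z => Real.exp (z - x)) (Set.uIcc (0:ℝ) x) :=
      (Real.continuous_exp.comp (continuous_id.sub continuous_const)).continuousOn
    have hgcont : ContinuousOn (fun u => Ftail m (x + Real.log u))
        ((fun z => Real.exp (z - x)) '' Set.uIcc (0:ℝ) x) := by
      have h1 : ContinuousOn (fun u : ℝ => Ftail m (x + Real.log u)) (Set.Ioi 0) :=
        (Ftail_continuous hm).comp_continuousOn
          (continuousOn_const.add (Real.continuousOn_log.mono fun u hu => ne_of_gt hu))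
      refine h1.mono ?_
      rintro _ ⟨z, _, rfl⟩
      exact Real.exp_pos _
    have hsub := intervalIntegral.integral_comp_smul_deriv' hderiv hcont' hgcont
    have hL : (fun z => Real.exp (z - x) •
        ((fun u => Ftail m (x + Real.log u)) ∘ (fun z => Real.exp (z - x))) z)
        = fun z => Real.exp (z - x) * Ftail m (x + (z - x)) := by
      funext z
      simp [Function.comp, Real.log_exp, smul_eq_mul]
    rw [hL] at hsub
    have hends : Real.exp (0 - x) = u₀ := by simp [hu₀def]
    have hends2 : Real.exp (x - x) = 1 := by simp
    rw [hends, hends2] at hsub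
    rw [← hsub]
    have hcong2 : Set.EqOn (fun z => Real.exp (z - x) * Ftail m (x + (z - x)))
        (fun z => Real.exp (-x) * ∑ j ∈ Finset.range m, z ^ j / (Nat.factorial j : ℝ))
        (Set.uIcc (0:ℝ) x) := by
      intro z hz
      rw [Set.uIcc_of_le hx] at hz
      have hz0 : 0 ≤ z := hz.1
      show Real.exp (z - x) * Ftail m (x + (z - x))
          = Real.exp (-x) * ∑ j ∈ Finset.range m, z ^ j / (Nat.factorial j : ℝ)
      rw [show x + (z - x) = z by ring]
      unfold Ftail
      rw [if_pos hz0, ← mul_assoc, ← Real.exp_add]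
      ring_nf
    rw [intervalIntegral.integral_congr hcong2]
    rw [intervalIntegral.integral_const_mul]
    congr 1
    have hintpow : ∀ j : ℕ, IntervalIntegrable
        (fun z : ℝ => z ^ j / (Nat.factorial j : ℝ)) MeasureTheory.volume 0 x :=
      fun j => ((continuous_pow j).div_const _).intervalIntegrable _ _
    rw [intervalIntegral.integral_finset_sum (fun j _ => hintpow j)]
    refine Finset.sum_congr rfl fun j _ => ?_
    rw [intervalIntegral.integral_div, integral_pow]
    rw [Nat.factorial_succ]
    push_cast
    field_simp
    simp
  rw [← hsplit, hI1, hI2]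
  unfold Ftail
  rw [if_pos hx, Finset.sum_range_succ']
  simp only [pow_zero, Nat.factorial_zero, Nat.cast_one]
  rw [mul_add]
  norm_num
  ring

lemma tail_Ici_le {Ω : Type*} [MeasurableSpace Ω] (P : Measure Ω) [IsProbabilityMeasure P]
    (W : Ω → ℝ)
    (hW : ∀ x : ℝ, 0 ≤ x → P {ω | x < W ω} = ENNReal.ofReal (Real.exp (-x))) (c : ℝ) :
    P {ω | c ≤ W ω} ≤ ENNReal.ofReal (Real.exp (-(max c 0))) := by
  rcases le_or_gt c 0 with hc | hc
  · rw [max_eq_right hc]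
    simp only [neg_zero, Real.exp_zero, ENNReal.ofReal_one]
    exact prob_le_one
  · rw [max_eq_left hc.le]
    have h0 : Filter.Tendsto (fun n : ℕ => 1 / ((n:ℝ) + 1)) Filter.atTop (nhds 0) :=
      tendsto_one_div_add_atTop_nhds_zero_nat
    have h1 : Filter.Tendsto (fun n : ℕ => c - 1 / ((n:ℝ) + 1)) Filter.atTop (nhds c) := by
      simpa using Filter.Tendsto.const_sub c h0
    have hlim : Filter.Tendsto (fun n : ℕ => ENNReal.ofReal (Real.exp (-(c - 1 / ((n:ℝ) + 1)))))
        Filter.atTop (nhds (ENNReal.ofReal (Real.exp (-c)))) :=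
      (ENNReal.continuous_ofReal.tendsto _).comp ((Real.continuous_exp.tendsto _).comp h1.neg)
    refine ge_of_tendsto hlim ?_
    filter_upwards [h0.eventually_lt_const hc] with n hn
    have hpos : 0 < 1 / ((n:ℝ) + 1) := by positivity
    calc P {ω | c ≤ W ω} ≤ P {ω | c - 1 / ((n:ℝ) + 1) < W ω} :=
          measure_mono (fun ω (h : c ≤ W ω) => show c - 1 / ((n:ℝ) + 1) < W ω by linarith)
      _ = ENNReal.ofReal (Real.exp (-(c - 1 / ((n:ℝ) + 1)))) := hW _ (by linarith)

lemma step_lemma {Ω : Type*} [MeasurableSpace Ω] (P : Measure Ω) [IsProbabilityMeasure P]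
    (S W : Ω → ℝ) (hSm : Measurable S) (hWm : Measurable W)
    (hind : IndepFun S W P)
    (hW : ∀ x : ℝ, 0 ≤ x → P {ω | x < W ω} = ENNReal.ofReal (Real.exp (-x)))
    {m : ℕ} (hm : 1 ≤ m)
    (hS : ∀ x : ℝ, P {ω | x ≤ S ω} ≤ ENNReal.ofReal (Ftail m x)) (x : ℝ) :
    P {ω | x ≤ S ω + W ω} ≤ ENNReal.ofReal (Ftail (m + 1) x) := by
  rcases lt_or_ge x 0 with hx | hx
  · rw [Ftail_of_nonpos (by omega) hx.le]
    simpa using prob_le_one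
  · set ν := P.map S with hν
    set μ := P.map W with hμ
    haveI : IsProbabilityMeasure ν := Measure.isProbabilityMeasure_map hSm.aemeasurable
    haveI : IsProbabilityMeasure μ := Measure.isProbabilityMeasure_map hWm.aemeasurable
    have hmapeq : P.map (fun ω => (S ω, W ω)) = ν.prod μ :=
      (ProbabilityTheory.indepFun_iff_map_prod_eq_prod_map_map hSm.aemeasurable
        hWm.aemeasurable).mp hind
    have hsetm : MeasurableSet {p : ℝ × ℝ | x ≤ p.1 + p.2} :=
      measurableSet_le measurable_const (measurable_fst.add measurable_snd)
    have h1 : P {ω | x ≤ S ω + W ω} = (ν.prod μ) {p : ℝ × ℝ | x ≤ p.1 + p.2} := by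
      rw [← hmapeq, Measure.map_apply (hSm.prodMk hWm) hsetm]
      rfl
    have h2 : (ν.prod μ) {p : ℝ × ℝ | x ≤ p.1 + p.2} = ∫⁻ y, μ (Set.Ici (x - y)) ∂ν := by
      rw [Measure.prod_apply hsetm]
      refine lintegral_congr fun y => ?_
      congr 1
      ext z
      simp only [Set.mem_preimage, Set.mem_setOf_eq, Set.mem_Ici]
      constructor <;> intro <;> linarith
    have h3 : ∀ y : ℝ, μ (Set.Ici (x - y)) ≤ ENNReal.ofReal (Real.exp (-(max (x - y) 0))) := by
      intro y
      have heq : μ (Set.Ici (x - y)) = P {ω | x - y ≤ W ω} := by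
        rw [hμ, Measure.map_apply hWm measurableSet_Ici]
        rfl
      rw [heq]
      exact tail_Ici_le P W hW _
    have h4 : P {ω | x ≤ S ω + W ω}
        ≤ ∫⁻ y, ENNReal.ofReal (Real.exp (-(max (x - y) 0))) ∂ν := by
      rw [h1, h2]; exact lintegral_mono h3
    have hfm : AEMeasurable (fun y : ℝ => Real.exp (-(max (x - y) 0))) ν :=
      (Real.continuous_exp.comp
        (((continuous_const.sub continuous_id).max continuous_const).neg)).aemeasurable
    have h5 : ∫⁻ y, ENNReal.ofReal (Real.exp (-(max (x - y) 0))) ∂ν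
        = ∫⁻ t in Set.Ioi (0:ℝ), ν {y | t < Real.exp (-(max (x - y) 0))} :=
      lintegral_eq_lintegral_meas_lt ν (Filter.Eventually.of_forall fun y => (Real.exp_pos _).le)
        hfm
    have h6 : ∀ t ∈ Set.Ioi (0:ℝ), ν {y | t < Real.exp (-(max (x - y) 0))}
        ≤ (Set.Ioo (0:ℝ) 1).indicator (fun u => ENNReal.ofReal (Ftail m (x + Real.log u))) t := by
      intro t ht
      rcases lt_or_ge t 1 with ht1 | ht1
      · rw [Set.indicator_of_mem (Set.mem_Ioo.mpr ⟨Set.mem_Ioi.mp ht, ht1⟩)]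
        have hset : {y : ℝ | t < Real.exp (-(max (x - y) 0))} ⊆ Set.Ioi (x + Real.log t) := by
          intro y hy
          have hy' : t < Real.exp (-(max (x - y) 0)) := hy
          have hlog : Real.log t < -(max (x - y) 0) := (Real.log_lt_iff_lt_exp (Set.mem_Ioi.mp ht)).mpr hy'
          have h' : Real.log t < -(x - y) :=
            lt_of_lt_of_le hlog (neg_le_neg (le_max_left _ _))
          simp only [Set.mem_Ioi]
          linarith
        calc ν {y | t < Real.exp (-(max (x - y) 0))} ≤ ν (Set.Ioi (x + Real.log t)) :=
              measure_mono hset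
          _ = P {ω | x + Real.log t < S ω} := by
              rw [hν, Measure.map_apply hSm measurableSet_Ioi]; rfl
          _ ≤ P {ω | x + Real.log t ≤ S ω} :=
              measure_mono (fun ω (h : x + Real.log t < S ω) =>
                show x + Real.log t ≤ S ω from h.le)
          _ ≤ ENNReal.ofReal (Ftail m (x + Real.log t)) := hS _
      · have hempty : {y : ℝ | t < Real.exp (-(max (x - y) 0))} = ∅ := by
          ext y
          simp only [Set.mem_setOf_eq, Set.mem_empty_iff_false, iff_false, not_lt]
          calc Real.exp (-(max (x - y) 0)) ≤ Real.exp 0 :=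
                Real.exp_le_exp.mpr (neg_nonpos.mpr (le_max_right _ _))
            _ = 1 := Real.exp_zero
            _ ≤ t := ht1
        rw [hempty, Set.indicator_of_notMem (fun h => absurd h.2 (not_lt.mpr ht1))]
        simp
    have h7 : ∫⁻ t in Set.Ioi (0:ℝ), ν {y | t < Real.exp (-(max (x - y) 0))}
        ≤ ∫⁻ t in Set.Ioo (0:ℝ) 1, ENNReal.ofReal (Ftail m (x + Real.log t)) := by
      calc ∫⁻ t in Set.Ioi (0:ℝ), ν {y | t < Real.exp (-(max (x - y) 0))}
          ≤ ∫⁻ t in Set.Ioi (0:ℝ), (Set.Ioo (0:ℝ) 1).indicator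
              (fun u => ENNReal.ofReal (Ftail m (x + Real.log u))) t :=
            setLIntegral_mono' measurableSet_Ioi h6
        _ ≤ ∫⁻ t, (Set.Ioo (0:ℝ) 1).indicator
              (fun u => ENNReal.ofReal (Ftail m (x + Real.log u))) t :=
            setLIntegral_le_lintegral _ _
        _ = ∫⁻ t in Set.Ioo (0:ℝ) 1, ENNReal.ofReal (Ftail m (x + Real.log t)) :=
            lintegral_indicator measurableSet_Ioo _
    have hInt : IntegrableOn (fun u => Ftail m (x + Real.log u)) (Set.Ioo 0 1)
        MeasureTheory.volume :=
      Measure.integrableOn_of_bounded (M := 1) measure_Ioo_lt_top.ne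
        (Ftail_comp_log_measurable hm x).aestronglyMeasurable
        (Filter.Eventually.of_forall fun u => by
          simpa using Ftail_comp_log_bound (m := m) x u)
    have h8 : ∫⁻ t in Set.Ioo (0:ℝ) 1, ENNReal.ofReal (Ftail m (x + Real.log t))
        = ENNReal.ofReal (∫ t in Set.Ioo (0:ℝ) 1, Ftail m (x + Real.log t)) :=
      (ofReal_integral_eq_lintegral_ofReal hInt
        (Filter.Eventually.of_forall fun u => Ftail_nonneg m _)).symm
    have h9 : ∫ t in Set.Ioo (0:ℝ) 1, Ftail m (x + Real.log t) = Ftail (m + 1) x := by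
      rw [← integral_Ioc_eq_integral_Ioo, ← intervalIntegral.integral_of_le zero_le_one]
      exact Ftail_integral hm hx
    calc P {ω | x ≤ S ω + W ω}
        ≤ ∫⁻ y, ENNReal.ofReal (Real.exp (-(max (x - y) 0))) ∂ν := h4
      _ = ∫⁻ t in Set.Ioi (0:ℝ), ν {y | t < Real.exp (-(max (x - y) 0))} := h5
      _ ≤ ∫⁻ t in Set.Ioo (0:ℝ) 1, ENNReal.ofReal (Ftail m (x + Real.log t)) := h7
      _ = ENNReal.ofReal (∫ t in Set.Ioo (0:ℝ) 1, Ftail m (x + Real.log t)) := h8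
      _ = ENNReal.ofReal (Ftail (m + 1) x) := by rw [h9]


lemma Ftail_le_exp (k : ℕ) (hk : 0 < k) (lam : ℝ) :
    Ftail k (lam * k) ≤ Real.exp (1 - lam) := by
  unfold Ftail
  split
  case isFalse h =>
    have hlam : lam < 0 := by
      by_contra hl
      push_neg at hl
      exact h (mul_nonneg hl (Nat.cast_nonneg k))
    exact Real.one_le_exp (by linarith)
  case isTrue h =>
    have hkpos : (0:ℝ) < k := Nat.cast_pos.mpr hk
    have hlam : 0 ≤ lam := by
      by_contra hl
      push_neg at hl
      exact absurd h (not_le.mpr (mul_neg_of_neg_of_pos hl hkpos))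
    set b : ℝ := lam * ((k:ℝ) - 1) with hb
    have hk1 : (1:ℝ) ≤ k := by exact_mod_cast hk
    have hbnn : 0 ≤ b := mul_nonneg hlam (by linarith)
    have hterm : ∀ j ∈ Finset.range k,
        (lam * k) ^ j / (Nat.factorial j : ℝ)
          ≤ Real.exp 1 * (b ^ j / (Nat.factorial j : ℝ)) := by
      intro j hj
      have hjk : (j:ℝ) ≤ (k:ℝ) - 1 := by
        have := Finset.mem_range.mp hj
        have : (j:ℝ) + 1 ≤ (k:ℝ) := by exact_mod_cast this
        linarith
      have hkey : (k:ℝ) ^ j ≤ Real.exp 1 * ((k:ℝ) - 1) ^ j := by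
        rcases eq_or_lt_of_le hk1 with hk1' | hk1'
        · -- k = 1, so j = 0
          have hkk : k = 1 := by exact_mod_cast hk1'.symm
          have hj0 : j = 0 := by
            have := Finset.mem_range.mp hj
            omega
          subst hj0
          simpa using Real.one_le_exp zero_le_one
        · have hn : (0:ℝ) < (k:ℝ) - 1 := by linarith
          have hbase : (k:ℝ) ≤ ((k:ℝ) - 1) * Real.exp (1 / ((k:ℝ) - 1)) := by
            have := Real.add_one_le_exp (1 / ((k:ℝ) - 1))
            calc (k:ℝ) = ((k:ℝ) - 1) * (1 / ((k:ℝ) - 1) + 1) := by field_simp; ring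
              _ ≤ ((k:ℝ) - 1) * Real.exp (1 / ((k:ℝ) - 1)) := by
                  exact mul_le_mul_of_nonneg_left this (by linarith)
          calc (k:ℝ) ^ j ≤ (((k:ℝ) - 1) * Real.exp (1 / ((k:ℝ) - 1))) ^ j :=
                pow_le_pow_left₀ (by linarith) hbase j
            _ = ((k:ℝ) - 1) ^ j * Real.exp (1 / ((k:ℝ) - 1)) ^ j := mul_pow _ _ _
            _ = ((k:ℝ) - 1) ^ j * Real.exp (j * (1 / ((k:ℝ) - 1))) := by
                rw [Real.exp_nat_mul]
            _ ≤ ((k:ℝ) - 1) ^ j * Real.exp 1 := by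
                refine mul_le_mul_of_nonneg_left (Real.exp_le_exp.mpr ?_)
                  (pow_nonneg (by linarith) j)
                have : (j:ℝ) * (1 / ((k:ℝ) - 1)) = (j:ℝ) / ((k:ℝ) - 1) := by ring
                rw [this]
                exact (div_le_one hn).mpr hjk
            _ = Real.exp 1 * ((k:ℝ) - 1) ^ j := mul_comm _ _
      have expand : (lam * k) ^ j = lam ^ j * (k:ℝ) ^ j := mul_pow _ _ _
      have expandb : b ^ j = lam ^ j * ((k:ℝ) - 1) ^ j := mul_pow _ _ _
      rw [expand, expandb]
      have hfact : (0:ℝ) < (Nat.factorial j : ℝ) := Nat.cast_pos.mpr (Nat.factorial_pos j)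
      have hmul : lam ^ j * (k:ℝ) ^ j ≤ lam ^ j * (Real.exp 1 * ((k:ℝ) - 1) ^ j) :=
        mul_le_mul_of_nonneg_left hkey (pow_nonneg hlam j)
      calc lam ^ j * (k:ℝ) ^ j / (Nat.factorial j : ℝ)
          ≤ lam ^ j * (Real.exp 1 * ((k:ℝ) - 1) ^ j) / (Nat.factorial j : ℝ) :=
            (div_le_div_iff_of_pos_right hfact).mpr hmul
        _ = Real.exp 1 * (lam ^ j * ((k:ℝ) - 1) ^ j / (Nat.factorial j : ℝ)) := by ring
    have hsum : ∑ j ∈ Finset.range k, (lam * k) ^ j / (Nat.factorial j : ℝ)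
        ≤ Real.exp 1 * Real.exp b := by
      calc ∑ j ∈ Finset.range k, (lam * k) ^ j / (Nat.factorial j : ℝ)
          ≤ ∑ j ∈ Finset.range k, Real.exp 1 * (b ^ j / (Nat.factorial j : ℝ)) :=
            Finset.sum_le_sum hterm
        _ = Real.exp 1 * ∑ j ∈ Finset.range k, b ^ j / (Nat.factorial j : ℝ) := by
            rw [Finset.mul_sum]
        _ ≤ Real.exp 1 * Real.exp b :=
            mul_le_mul_of_nonneg_left (Real.sum_le_exp_of_nonneg hbnn k) (Real.exp_nonneg _)
    calc Real.exp (-(lam * k)) * ∑ j ∈ Finset.range k, (lam * k) ^ j / (Nat.factorial j : ℝ)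
        ≤ Real.exp (-(lam * k)) * (Real.exp 1 * Real.exp b) :=
          mul_le_mul_of_nonneg_left hsum (Real.exp_nonneg _)
      _ = Real.exp (-(lam * k) + 1 + b) := by
          rw [← Real.exp_add, ← Real.exp_add]
          ring_nf
      _ = Real.exp (1 - lam) := by congr 1; rw [hb]; ring

/-- For an Erlang(k,1) random variable `X` (a sum of `k` i.i.d. exponential(1)
random variables) and any real `λ`, `P(X ≥ λ k) ≤ exp (1 - λ)`. -/
theorem stmt4 {Ω : Type*} [MeasurableSpace Ω] (P : Measure Ω) [IsProbabilityMeasure P]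
    (k : ℕ) (hk : 0 < k) (Z : Fin k → Ω → ℝ)
    (hmeas : ∀ i, Measurable (Z i))
    (hindep : iIndepFun Z P)
    (hZ : ∀ i, ∀ x : ℝ, 0 ≤ x → P {ω | x < Z i ω} = ENNReal.ofReal (Real.exp (-x)))
    (lam : ℝ) :
    P {ω | lam * k ≤ ∑ i, Z i ω} ≤ ENNReal.ofReal (Real.exp (1 - lam)) := by
  haveI : Nonempty (Fin k) := Fin.pos_iff_nonempty.mp hk
  have key : ∀ (s : Finset (Fin k)) (hs : s.Nonempty), ∀ x : ℝ,
      P {ω | x ≤ ∑ i ∈ s, Z i ω} ≤ ENNReal.ofReal (Ftail s.card x) := by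
    intro s hs
    induction hs using Finset.Nonempty.cons_induction with
    | singleton a =>
      intro x
      have hF1 : Ftail 1 x = Real.exp (-(max x 0)) := by
        unfold Ftail
        split
        case isTrue h => rw [max_eq_left h]; simp
        case isFalse h =>
          rw [max_eq_right (le_of_not_ge (fun hc => h hc))]
          simp
      have : {ω | x ≤ ∑ i ∈ ({a} : Finset (Fin k)), Z i ω} = {ω | x ≤ Z a ω} := by
        ext ω; simp
      rw [this, Finset.card_singleton, hF1]
      exact tail_Ici_le P (Z a) (hZ a) x
    | cons a s ha hs ih =>
      intro x
      have hSmeas : Measurable (fun ω => ∑ i ∈ s, Z i ω) :=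
        Finset.measurable_sum s fun i _ => hmeas i
      have hind : IndepFun (fun ω => ∑ i ∈ s, Z i ω) (Z a) P := by
        have h := hindep.indepFun_finsetSum_of_notMem hmeas ha
        have hfun : (∑ j ∈ s, Z j) = fun ω => ∑ i ∈ s, Z i ω := by
          funext ω
          simp [Finset.sum_apply]
        rwa [hfun] at h
      have hstep := step_lemma P (fun ω => ∑ i ∈ s, Z i ω) (Z a) hSmeas (hmeas a) hind
        (hZ a) hs.card_pos ih x
      have hset : {ω | x ≤ ∑ i ∈ Finset.cons a s ha, Z i ω}
          = {ω | x ≤ (fun ω => ∑ i ∈ s, Z i ω) ω + Z a ω} := by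
        ext ω
        simp only [Set.mem_setOf_eq, Finset.sum_cons]
        constructor <;> intro h' <;> linarith
      rw [hset, Finset.card_cons]
      exact hstep
  have huniv := key Finset.univ Finset.univ_nonempty (lam * k)
  rw [Finset.card_univ, Fintype.card_fin] at huniv
  exact huniv.trans (ENNReal.ofReal_le_ofReal (Ftail_le_exp k hk lam))
end

section
/- Let G be a simple n-vertex d-degenerate graph with maximum degree Δ. Then the number of walks of length L in G is at most 2n·2^L·(dΔ)^{L/2}. -/
open Finset SimpleGraph

/-- A graph is `d`-degenerate if every (induced) subgraph has a vertex of
degree at most `d`: every nonempty vertex subset `s` contains a vertex with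
at most `d` neighbours inside `s`. -/
def Degenerate {V : Type*} [DecidableEq V] (G : SimpleGraph V) [DecidableRel G.Adj]
    (d : ℕ) : Prop :=
  ∀ s : Finset V, s.Nonempty → ∃ v ∈ s, (s.filter (G.Adj v)).card ≤ d

section AuxLemmas

lemma decide_lt_swap' {a b : ℕ} (h : a ≠ b) : decide (a < b) = !decide (b < a) := by
  by_cases hab : a < b
  · simp [hab, Nat.lt_asymm hab]
  · have hba : b < a := by omega
    simp [hab, hba]

lemma real_bound' {d Δ : ℕ} (hdΔ : d ≤ Δ) {c L : ℕ} (hcL : c ≤ L) (h2c : L ≤ 2*c) :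
    ((d:ℝ)^c * (Δ:ℝ)^(L-c) : ℝ) ≤ ((d*Δ : ℝ)) ^ ((L:ℝ)/2) := by
  set x := (d:ℝ) with hx
  set y := (Δ:ℝ) with hy
  have hx0 : (0:ℝ) ≤ x := Nat.cast_nonneg d
  have hy0 : (0:ℝ) ≤ y := Nat.cast_nonneg Δ
  have hxy : x ≤ y := Nat.cast_le.2 hdΔ
  have ha : (0:ℝ) ≤ x^c * y^(L-c) := mul_nonneg (pow_nonneg hx0 _) (pow_nonneg hy0 _)
  have hb : (0:ℝ) ≤ (x*y) ^ ((L:ℝ)/2) := Real.rpow_nonneg (mul_nonneg hx0 hy0) _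
  have hsq : (x^c * y^(L-c))^2 ≤ ((x*y) ^ ((L:ℝ)/2))^2 := by
    have hrhs : ((x*y) ^ ((L:ℝ)/2))^2 = x^L * y^L := by
      rw [← Real.rpow_natCast ((x*y) ^ ((L:ℝ)/2)) 2, ← Real.rpow_mul (mul_nonneg hx0 hy0)]
      norm_num
      rw [mul_pow]
    rw [hrhs, mul_pow, ← pow_mul, ← pow_mul]
    set k := 2*c - L with hk
    have hkL : k ≤ L := by omega
    rw [show c*2 = L + k from by omega, show (L-c)*2 = L - k from by omega, pow_add]
    have hxk : x^k ≤ y^k := pow_le_pow_left₀ hx0 hxy k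
    calc x^L * x^k * y^(L-k) ≤ x^L * y^k * y^(L-k) := by
          apply mul_le_mul_of_nonneg_right _ (pow_nonneg hy0 _)
          exact mul_le_mul_of_nonneg_left hxk (pow_nonneg hx0 L)
      _ = x^L * y^L := by rw [mul_assoc, ← pow_add, show k+(L-k) = L from by omega]
  calc x^c * y^(L-c) = Real.sqrt ((x^c * y^(L-c))^2) := (Real.sqrt_sq ha).symm
    _ ≤ Real.sqrt (((x*y) ^ ((L:ℝ)/2))^2) := Real.sqrt_le_sqrt hsq
    _ = (x*y) ^ ((L:ℝ)/2) := Real.sqrt_sq hb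

variable {V : Type*}

lemma walk_ext' {G : SimpleGraph V} : ∀ {u v : V} (p q : G.Walk u v), p.length = q.length →
    (∀ i, p.getVert i = q.getVert i) → p = q := by
  intro u v p
  induction p with
  | nil =>
    intro q hl _
    cases q with
    | nil => rfl
    | cons h q => simp at hl
  | @cons u a v h p ihp =>
    intro q hl hv
    cases q with
    | nil => simp at hl
    | @cons _ b _ h' q' =>
      have hw : a = b := by
        have := hv 1
        simpa [SimpleGraph.Walk.getVert_cons_succ, SimpleGraph.Walk.getVert_zero] using this
      subst hw
      have : p = q' := ihp q' (by simpa using hl) (fun i => by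
        have := hv (i + 1)
        simpa [SimpleGraph.Walk.getVert_cons_succ] using this)
      rw [this]

lemma exists_rankOn' [DecidableEq V] (G : SimpleGraph V) [DecidableRel G.Adj] {d : ℕ}
    (hdeg : ∀ s : Finset V, s.Nonempty → ∃ v ∈ s, (s.filter (G.Adj v)).card ≤ d) :
    ∀ s : Finset V, ∃ r : V → ℕ, Set.InjOn r s ∧
      ∀ v ∈ s, (s.filter (fun u => G.Adj v u ∧ r v < r u)).card ≤ d := by
  intro s
  induction s using Finset.strongInduction with
  | H s ih =>
    rcases s.eq_empty_or_nonempty with rfl | hs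
    · exact ⟨fun _ => 0, by simp [Set.InjOn], by simp⟩
    · obtain ⟨v, hv, hvd⟩ := hdeg s hs
      obtain ⟨r', hinj', hr'⟩ := ih (s.erase v) (Finset.erase_ssubset hv)
      refine ⟨fun u => if u = v then 0 else r' u + 1, ?_, ?_⟩
      · intro a ha b hb hab
        by_cases hav : a = v
        · by_cases hbv : b = v
          · rw [hav, hbv]
          · exfalso; simp [hav, hbv] at hab
        · by_cases hbv : b = v
          · exfalso; simp [hav, hbv] at hab
          · simp only [hav, hbv, if_false, ite_false, Nat.add_right_cancel_iff] at hab
            exact hinj' (Finset.mem_erase.2 ⟨hav, ha⟩) (Finset.mem_erase.2 ⟨hbv, hb⟩) hab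
      · intro u hu
        by_cases huv : u = v
        · subst huv
          refine le_trans (Finset.card_le_card ?_) hvd
          intro w hw
          simp only [Finset.mem_filter] at hw ⊢
          exact ⟨hw.1, hw.2.1⟩
        · refine le_trans (Finset.card_le_card ?_) (hr' u (Finset.mem_erase.2 ⟨huv, hu⟩))
          intro w hw
          simp only [Finset.mem_filter] at hw ⊢
          obtain ⟨hws, hadj, hlt⟩ := hw
          have hwv : w ≠ v := by
            rintro rfl
            simp [huv] at hlt
          refine ⟨Finset.mem_erase.2 ⟨hwv, hws⟩, hadj, ?_⟩
          simpa [huv, hwv] using hlt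

variable [Fintype V] [DecidableEq V] (G : SimpleGraph V) [DecidableRel G.Adj]

lemma card_walks_le' (L : ℕ) :
    (∑ u : V, ∑ v : V, (G.finsetWalkLength L u v).card) ≤
      (univ.filter (fun f : Fin (L+1) → V =>
        ∀ i : Fin L, G.Adj (f i.castSucc) (f i.succ))).card := by
  classical
  have hcard : (∑ u : V, ∑ v : V, (G.finsetWalkLength L u v).card) =
      ((univ : Finset V).sigma (fun u =>
        (univ : Finset V).sigma (fun v => G.finsetWalkLength L u v))).card := by
    rw [Finset.card_sigma]
    exact Finset.sum_congr rfl (fun u _ => (Finset.card_sigma _ _).symm)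
  rw [hcard]
  apply Finset.card_le_card_of_injOn
    (fun x => fun i : Fin (L+1) => x.2.2.getVert i)
  · rintro ⟨u, v, w⟩ hx
    simp only [Finset.mem_coe, Finset.mem_sigma, Finset.mem_univ, true_and,
      SimpleGraph.mem_finsetWalkLength_iff] at hx
    simp only [Finset.mem_coe, Finset.mem_filter, Finset.mem_univ, true_and]
    intro i
    have : (i.castSucc : ℕ) + 1 = (i.succ : ℕ) := by simp
    rw [← this] at *
    exact w.adj_getVert_succ (by rw [hx]; simpa using i.isLt)
  · rintro ⟨u, v, w⟩ hx ⟨u', v', w'⟩ hy h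
    simp only [Finset.mem_coe, Finset.mem_sigma, Finset.mem_univ, true_and,
      SimpleGraph.mem_finsetWalkLength_iff] at hx hy
    have hu : u = u' := by
      have := congrFun h (0 : Fin (L+1))
      simpa using this
    subst hu
    have hv : v = v' := by
      have := congrFun h (⟨L, by omega⟩ : Fin (L+1))
      simp only at this
      have h1 : w.getVert L = v := by rw [← hx]; exact w.getVert_length
      have h2 : w'.getVert L = v' := by rw [← hy]; exact w'.getVert_length
      rw [h1, h2] at this
      exact this
    subst hv
    have hw : w = w' := by
      apply walk_ext' _ _ (by rw [hx, hy])
      intro i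
      rcases le_or_gt i L with hi | hi
      · have := congrFun h (⟨i, by omega⟩ : Fin (L+1))
        simpa using this
      · rw [SimpleGraph.Walk.getVert_of_length_le w (by omega),
          SimpleGraph.Walk.getVert_of_length_le w' (by omega)]
    subst hw
    rfl

variable (r : V → ℕ)

/-- walks of length `L` (as vertex functions) with descent pattern `p` -/
def Tp (L : ℕ) (p : Fin L → Bool) : Finset (Fin (L+1) → V) :=
  univ.filter (fun f => (∀ i : Fin L, G.Adj (f i.castSucc) (f i.succ)) ∧
    (∀ i : Fin L, decide (r (f i.succ) < r (f i.castSucc)) = p i))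

lemma Tp_card_le {d Δ : ℕ}
    (hr : ∀ v : V, (univ.filter (fun u => G.Adj v u ∧ r v < r u)).card ≤ d)
    (hΔ : ∀ v : V, G.degree v ≤ Δ) :
    ∀ (L : ℕ) (p : Fin L → Bool),
      (Tp G r L p).card ≤ Fintype.card V * ∏ i, (if p i then d else Δ) := by
  intro L
  induction L with
  | zero =>
    intro p
    have : Tp G r 0 p = univ := by
      apply Finset.filter_true_of_mem
      intro f _
      exact ⟨fun i => i.elim0, fun i => i.elim0⟩
    rw [this]
    simp [Finset.card_univ]
  | succ L ih =>
    intro p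
    have key : (Tp G r (L+1) p).card ≤
        (if p 0 then d else Δ) * ((Tp G r (L+1) p).image (fun f => f ∘ Fin.succ)).card := by
      apply Finset.card_le_mul_card_image
      intro g hg
      apply le_trans (Finset.card_le_card_of_injOn (fun f => f 0)
        (t := if p 0 then univ.filter (fun u => G.Adj (g 0) u ∧ r (g 0) < r u)
              else G.neighborFinset (g 0)) ?_ ?_)
      · split
        · exact hr (g 0)
        · rw [SimpleGraph.card_neighborFinset_eq_degree]; exact hΔ (g 0)
      · intro f hf
        simp only [Finset.mem_coe, Finset.mem_filter, Tp, Finset.mem_univ, true_and] at hf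
        obtain ⟨⟨hadj, hpat⟩, hfg⟩ := hf
        have h0 : G.Adj (f 0) (f (Fin.succ 0)) := by
          have := hadj 0
          simpa using this
        have hg0 : f (Fin.succ 0) = g 0 := congrFun hfg 0
        rw [hg0] at h0
        have hp0 := hpat 0
        simp only [Fin.castSucc_zero] at hp0
        rw [hg0] at hp0
        by_cases hb : p 0 = true
        · rw [hb] at hp0
          simp only [hb, if_true, ite_true, Finset.mem_coe, Finset.mem_filter, Finset.mem_univ, true_and]
          exact ⟨h0.symm, of_decide_eq_true hp0⟩
        · simp only [Bool.not_eq_true] at hb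
          simp only [hb, Bool.false_eq_true, if_false, ite_false, Finset.mem_coe,
            SimpleGraph.mem_neighborFinset]
          exact h0.symm
      · intro f hf f' hf' h0
        simp only [Finset.coe_filter, Set.mem_setOf_eq] at hf hf'
        funext i
        cases i using Fin.cases with
        | zero => exact h0
        | succ j => exact (congrFun hf.2 j).trans (congrFun hf'.2 j).symm
    have himage : (Tp G r (L+1) p).image (fun f => f ∘ Fin.succ) ⊆
        Tp G r L (fun i => p i.succ) := by
      intro g hg
      simp only [Finset.mem_image] at hg
      obtain ⟨f, hf, rfl⟩ := hg
      simp only [Tp, Finset.mem_filter, Finset.mem_univ, true_and] at hf ⊢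
      obtain ⟨hadj, hpat⟩ := hf
      constructor
      · intro i
        have := hadj i.succ
        simpa [← Fin.succ_castSucc] using this
      · intro i
        have := hpat i.succ
        simpa [← Fin.succ_castSucc] using this
    calc (Tp G r (L+1) p).card
        ≤ (if p 0 then d else Δ) * ((Tp G r (L+1) p).image (fun f => f ∘ Fin.succ)).card :=
          key
      _ ≤ (if p 0 then d else Δ) * (Tp G r L (fun i => p i.succ)).card :=
          Nat.mul_le_mul_left _ (Finset.card_le_card himage)
      _ ≤ (if p 0 then d else Δ) *
            (Fintype.card V * ∏ i : Fin L, (if p (Fin.succ i) then d else Δ)) :=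
          Nat.mul_le_mul_left _ (ih _)
      _ = Fintype.card V * ∏ i, (if p i then d else Δ) := by
          rw [Fin.prod_univ_succ]; ring

lemma Tp_rev_mem (hinj : Function.Injective r) {L : ℕ} {p : Fin L → Bool}
    {f : Fin (L+1) → V} (hf : f ∈ Tp G r L p) :
    (f ∘ Fin.rev) ∈ Tp G r L (fun i => !(p i.rev)) := by
  simp only [Tp, Finset.mem_filter, Finset.mem_univ, true_and, Function.comp] at hf ⊢
  obtain ⟨hadj, hpat⟩ := hf
  constructor
  · intro i
    rw [Fin.rev_castSucc, Fin.rev_succ]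
    exact (hadj i.rev).symm
  · intro i
    simp only [Fin.rev_castSucc, Fin.rev_succ]
    have hne : r (f i.rev.succ) ≠ r (f i.rev.castSucc) :=
      fun h => (G.ne_of_adj (hadj i.rev)) (hinj h).symm
    rw [decide_lt_swap' (fun h => hne h.symm), hpat i.rev]

lemma Tp_rev_card (hinj : Function.Injective r) (L : ℕ) (p : Fin L → Bool) :
    (Tp G r L p).card = (Tp G r L (fun i => !(p i.rev))).card := by
  have hle : ∀ q : Fin L → Bool, (Tp G r L q).card ≤ (Tp G r L (fun i => !(q i.rev))).card := by
    intro q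
    apply Finset.card_le_card_of_injOn (fun f => f ∘ Fin.rev)
    · intro f hf; exact Tp_rev_mem G r hinj hf
    · intro f _ f' _ h
      funext i
      have := congrFun h i.rev
      simpa [Fin.rev_rev] using this
  refine le_antisymm (hle p) ?_
  have := hle (fun i => !(p i.rev))
  have hσσ : (fun i : Fin L => !( !(p i.rev.rev))) = p := funext fun i => by
    simp [Fin.rev_rev]
  rw [hσσ] at this
  exact this

lemma count_rev' (L : ℕ) (p : Fin L → Bool) :
    (univ.filter (fun i : Fin L => (!(p i.rev)) = true)).card
      = L - (univ.filter (fun i => p i = true)).card := by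
  have h1 : (univ.filter (fun i : Fin L => (!(p i.rev)) = true)).card
      = (univ.filter (fun i : Fin L => ¬ (p i = true))).card := by
    apply Finset.card_nbij' (fun i => i.rev) (fun i => i.rev)
    · intro i hi
      simp only [Finset.mem_coe, Finset.mem_filter, Finset.mem_univ, true_and,
        Bool.not_eq_true'] at hi ⊢
      simp [hi]
    · intro i hi
      simp only [Finset.mem_coe, Finset.mem_filter, Finset.mem_univ, true_and,
        Bool.not_eq_true'] at hi ⊢
      simp [Fin.rev_rev, hi]
    · intro i _; exact Fin.rev_rev i
    · intro i _; exact Fin.rev_rev i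
  rw [h1]
  have := Finset.card_filter_add_card_filter_not
    (s := (univ : Finset (Fin L))) (p := fun i => p i = true)
  simp only [Finset.card_univ, Fintype.card_fin] at this
  omega

end AuxLemmas

/-- An `n`-vertex `d`-degenerate graph with maximum degree `Δ` has at most
`2 n 2^L (dΔ)^{L/2}` walks of length `L`. -/
theorem stmt6 {V : Type*} [Fintype V] [DecidableEq V] (G : SimpleGraph V)
    [DecidableRel G.Adj] (n d Δ L : ℕ) (hn : Fintype.card V = n)
    (hdeg : Degenerate G d) (hΔ : ∀ v : V, G.degree v ≤ Δ) :
    ((∑ u : V, ∑ v : V, (G.finsetWalkLength L u v).card : ℕ) : ℝ)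
      ≤ 2 * n * 2 ^ L * ((d * Δ : ℝ) ^ ((L : ℝ) / 2)) := by
  classical
  set d' := min d Δ with hd'def
  have hdeg' : ∀ s : Finset V, s.Nonempty → ∃ v ∈ s, (s.filter (G.Adj v)).card ≤ d' := by
    intro s hs
    obtain ⟨v, hv, hvd⟩ := hdeg s hs
    refine ⟨v, hv, le_min hvd ?_⟩
    calc (s.filter (G.Adj v)).card ≤ (G.neighborFinset v).card := by
          apply Finset.card_le_card
          intro u hu
          simp only [Finset.mem_filter] at hu
          simpa [SimpleGraph.mem_neighborFinset] using hu.2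
      _ ≤ Δ := by rw [SimpleGraph.card_neighborFinset_eq_degree]; exact hΔ v
  obtain ⟨r, hrinj', hr'⟩ := exists_rankOn' G hdeg' univ
  have hrinj : Function.Injective r :=
    Set.injOn_univ.mp (by simpa using hrinj')
  have hr : ∀ v : V, (univ.filter (fun u => G.Adj v u ∧ r v < r u)).card ≤ d' :=
    fun v => hr' v (Finset.mem_univ v)
  set c : (Fin L → Bool) → ℕ := fun p => (univ.filter (fun i => p i = true)).card with hc
  have hcdef : ∀ p : Fin L → Bool, c p = (univ.filter (fun i => p i = true)).card :=
    fun p => rfl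
  clear_value c
  have hcle : ∀ p, c p ≤ L := by
    intro p
    rw [hcdef p]
    calc (univ.filter (fun i => p i = true)).card
        ≤ (univ : Finset (Fin L)).card := Finset.card_filter_le _ _
      _ = L := by simp
  set T : Finset (Fin (L+1) → V) :=
    univ.filter (fun f => ∀ i : Fin L, G.Adj (f i.castSucc) (f i.succ)) with hT
  have hWT : (∑ u : V, ∑ v : V, (G.finsetWalkLength L u v).card) ≤ T.card := card_walks_le' G L
  have hTsum : T.card = ∑ p : Fin L → Bool, (Tp G r L p).card := by
    rw [Finset.card_eq_sum_card_fiberwise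
      (f := fun f => (fun i : Fin L => decide (r (f i.succ) < r (f i.castSucc))))
      (t := univ) (fun _ _ => Finset.mem_univ _)]
    apply Finset.sum_congr rfl
    intro p _
    congr 1
    ext f
    simp only [hT, Finset.mem_filter, Finset.mem_univ, true_and, Tp, funext_iff]
    try tauto
  set S : Finset (Fin L → Bool) := univ.filter (fun p => L ≤ 2 * c p) with hS
  have hsplit : ∑ p : Fin L → Bool, (Tp G r L p).card ≤ 2 * ∑ p ∈ S, (Tp G r L p).card := by
    have h1 := Finset.sum_filter_add_sum_filter_not (univ : Finset (Fin L → Bool))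
      (fun p => L ≤ 2 * c p) (fun p => (Tp G r L p).card)
    have h2 : ∑ p ∈ univ.filter (fun p : Fin L → Bool => ¬ (L ≤ 2 * c p)),
        (Tp G r L p).card ≤ ∑ p ∈ S, (Tp G r L p).card := by
      have heq : ∀ p ∈ univ.filter (fun p : Fin L → Bool => ¬ (L ≤ 2 * c p)),
          (Tp G r L p).card = (Tp G r L (fun i => !(p i.rev))).card :=
        fun p _ => Tp_rev_card G r hrinj L p
      rw [Finset.sum_congr rfl heq]
      have himg := Finset.sum_image
        (s := univ.filter (fun p : Fin L → Bool => ¬ (L ≤ 2 * c p)))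
        (f := fun q => (Tp G r L q).card)
        (g := fun p => (fun i : Fin L => !(p i.rev)))
        (fun p _ q _ h => by
          funext i
          have := congrFun h i.rev
          simpa [Fin.rev_rev] using this)
      rw [← himg]
      apply Finset.sum_le_sum_of_subset
      intro q hq
      simp only [Finset.mem_image, Finset.mem_filter, Finset.mem_univ, true_and] at hq
      obtain ⟨p, hp, rfl⟩ := hq
      have hcrev : c (fun i => !(p i.rev)) = L - c p := by
        rw [hcdef, hcdef]
        exact count_rev' L p
      have := hcle p
      rw [hS, Finset.mem_filter]
      refine ⟨Finset.mem_univ _, ?_⟩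
      show L ≤ 2 * c (fun i => !(p i.rev))
      clear himg heq h1 hc hT hTsum hWT hS hcdef hcle hr hr' hrinj hrinj' hdeg' hdeg hΔ hn
      omega
    rw [← hS] at h1
    omega
  have hTp : ∀ p : Fin L → Bool,
      (Tp G r L p).card ≤ Fintype.card V * (d' ^ (c p) * Δ ^ (L - c p)) := by
    intro p
    refine le_trans (Tp_card_le G r hr hΔ L p) (le_of_eq ?_)
    congr 1
    have hsplitprod := Finset.prod_filter_mul_prod_filter_not (univ : Finset (Fin L))
      (fun i => p i = true) (fun i => if p i then d' else Δ)
    rw [← hsplitprod]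
    have hA : ∏ i ∈ univ.filter (fun i => p i = true), (if p i then d' else Δ)
        = d' ^ (c p) := by
      have hcong : ∀ i ∈ univ.filter (fun i : Fin L => p i = true),
          (if p i then d' else Δ) = d' := by
        intro i hi
        simp [(Finset.mem_filter.1 hi).2]
      rw [Finset.prod_congr rfl hcong, Finset.prod_const, hcdef p]
    have hB : ∏ i ∈ univ.filter (fun i => ¬ (p i = true)), (if p i then d' else Δ)
        = Δ ^ (L - c p) := by
      have hcong : ∀ i ∈ univ.filter (fun i : Fin L => ¬ (p i = true)),
          (if p i then d' else Δ) = Δ := by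
        intro i hi
        have h := (Finset.mem_filter.1 hi).2
        simp only [Bool.not_eq_true] at h
        simp [h]
      rw [Finset.prod_congr rfl hcong, Finset.prod_const]
      congr 1
      rw [hcdef p]
      have h := Finset.card_filter_add_card_filter_not
        (s := (univ : Finset (Fin L))) (p := fun i => p i = true)
      simp only [Finset.card_univ, Fintype.card_fin] at h
      have h2 := hcle p
      omega
    rw [hA, hB]
  have hX0 : (0:ℝ) ≤ ((d' * Δ : ℕ) : ℝ) ^ ((L:ℝ)/2) := Real.rpow_nonneg (by positivity) _
  have hreal : ∀ p ∈ S, ((Tp G r L p).card : ℝ) ≤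
      (n : ℝ) * (((d' : ℝ) * (Δ : ℝ)) ^ ((L:ℝ)/2)) := by
    intro p hp
    have h2cp : L ≤ 2 * c p := by
      have := Finset.mem_filter.1 hp
      exact this.2
    have h2 : ((d':ℝ)^(c p) * (Δ:ℝ)^(L - c p)) ≤ (((d':ℝ) * (Δ:ℝ)) ^ ((L:ℝ)/2)) :=
      real_bound' (min_le_right d Δ) (hcle p) h2cp
    calc ((Tp G r L p).card : ℝ)
        ≤ ((Fintype.card V * (d' ^ (c p) * Δ ^ (L - c p)) : ℕ) : ℝ) :=
          Nat.cast_le.2 (hTp p)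
      _ = (n : ℝ) * ((d':ℝ)^(c p) * (Δ:ℝ)^(L - c p)) := by
          push_cast [hn]; ring
      _ ≤ (n : ℝ) * (((d':ℝ) * (Δ:ℝ)) ^ ((L:ℝ)/2)) :=
          mul_le_mul_of_nonneg_left h2 (Nat.cast_nonneg n)
  have hScard : (S.card : ℝ) ≤ 2 ^ L := by
    have : S.card ≤ (univ : Finset (Fin L → Bool)).card := Finset.card_le_card (by simp [hS])
    have hcardfun : (univ : Finset (Fin L → Bool)).card = 2 ^ L := by
      simp [Finset.card_univ]
    calc (S.card : ℝ) ≤ ((univ : Finset (Fin L → Bool)).card : ℝ) := Nat.cast_le.2 this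
      _ = 2 ^ L := by rw [hcardfun]; push_cast; ring
  have hXnonneg : (0:ℝ) ≤ ((d':ℝ) * (Δ:ℝ)) ^ ((L:ℝ)/2) := Real.rpow_nonneg (by positivity) _
  have hfinal : ((∑ u : V, ∑ v : V, (G.finsetWalkLength L u v).card : ℕ) : ℝ)
      ≤ 2 * n * 2 ^ L * (((d':ℝ) * (Δ:ℝ)) ^ ((L:ℝ)/2)) := by
    calc ((∑ u : V, ∑ v : V, (G.finsetWalkLength L u v).card : ℕ) : ℝ)
        ≤ ((2 * ∑ p ∈ S, (Tp G r L p).card : ℕ) : ℝ) := by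
          apply Nat.cast_le.2
          calc (∑ u : V, ∑ v : V, (G.finsetWalkLength L u v).card) ≤ T.card := hWT
            _ = ∑ p : Fin L → Bool, (Tp G r L p).card := hTsum
            _ ≤ 2 * ∑ p ∈ S, (Tp G r L p).card := hsplit
      _ = 2 * ∑ p ∈ S, ((Tp G r L p).card : ℝ) := by push_cast; ring
      _ ≤ 2 * ∑ p ∈ S, ((n : ℝ) * (((d':ℝ) * (Δ:ℝ)) ^ ((L:ℝ)/2))) := by
          have := Finset.sum_le_sum hreal
          linarith
      _ = 2 * S.card * ((n : ℝ) * (((d':ℝ) * (Δ:ℝ)) ^ ((L:ℝ)/2))) := by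
          rw [Finset.sum_const]
          push_cast
          ring
      _ ≤ 2 * 2 ^ L * ((n : ℝ) * (((d':ℝ) * (Δ:ℝ)) ^ ((L:ℝ)/2))) := by
          apply mul_le_mul_of_nonneg_right _ (by positivity)
          linarith
      _ = 2 * n * 2 ^ L * (((d':ℝ) * (Δ:ℝ)) ^ ((L:ℝ)/2)) := by ring
  refine hfinal.trans ?_
  apply mul_le_mul_of_nonneg_left _ (by positivity)
  apply Real.rpow_le_rpow (by positivity) _ (by positivity)
  have : (d' : ℝ) ≤ (d : ℝ) := Nat.cast_le.2 (min_le_left d Δ)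
  nlinarith [Nat.cast_nonneg (α := ℝ) Δ]
end
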